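/- arXiv:1904.12281 — 3 statements merged into one kernel-verified Lean document; each statement's English description precedes it below -/
import Mathlib

section
/- Let B, γ > 0, w ∈ ℕ with w ≥ 1, p ∈ (0,1), and let (ξ_j)_{j=1}^N be nonnegative reals with ∑_{j=1}^N ξ_j ≤ B. If for some index j < N we have ξ_j > 0 and the stationarity identity (1-p)/(1+γξ_{j+1}) = 1/(1+γξ_j) - p/(1 + (γ/w)(B - ∑_{i=1}^j ξ_i)) holds, and additionally ξ_j < (B - ∑_{i=1}^j ξ_i)/w, then ξ_{j+1} < ξ_j. -/
/-- If the KKT stationarity identity holds at index `j < N`, `ξ_j > 0`, and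
`ξ_j < (B - ∑_{i=1}^j ξ_i)/w`, then `ξ_{j+1} < ξ_j`. -/
theorem step_decrease (B γ p : ℝ) (w : ℕ) (hB : 0 < B) (hγ : 0 < γ) (hw : 1 ≤ w)
    (hp : 0 < p) (hp1 : p < 1) (N : ℕ) (ξ : ℕ → ℝ)
    (hnonneg : ∀ j, 1 ≤ j → j ≤ N → 0 ≤ ξ j)
    (hsum : ∑ j ∈ Finset.Icc 1 N, ξ j ≤ B)
    (j : ℕ) (hj : 1 ≤ j) (hjN : j < N) (hpos : 0 < ξ j)
    (hrec : (1 - p) / (1 + γ * ξ (j + 1))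
        = 1 / (1 + γ * ξ j)
          - p / (1 + (γ / w) * (B - ∑ i ∈ Finset.Icc 1 j, ξ i)))
    (hlt : ξ j < (B - ∑ i ∈ Finset.Icc 1 j, ξ i) / w) :
    ξ (j + 1) < ξ j := by
  set R : ℝ := B - ∑ i ∈ Finset.Icc 1 j, ξ i with hR
  have hwpos : (0:ℝ) < (w:ℝ) := by exact_mod_cast Nat.lt_of_lt_of_le Nat.zero_lt_one hw
  have hnext : 0 ≤ ξ (j + 1) := hnonneg (j+1) (by omega) (by omega)
  have hA : (1:ℝ) < 1 + γ * ξ j := by nlinarith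
  have hApos : (0:ℝ) < 1 + γ * ξ j := by linarith
  have hXpos : (0:ℝ) < 1 + γ * ξ (j+1) := by nlinarith
  have hDA : 1 + γ * ξ j < 1 + (γ / w) * R := by
    have h1 : ξ j * w < R := (lt_div_iff₀ hwpos).mp hlt
    have h2 : γ / w * R = γ * R / w := by ring
    have h3 : γ * ξ j < γ * R / w := by
      rw [lt_div_iff₀ hwpos]; nlinarith
    linarith
  have hDpos : (0:ℝ) < 1 + (γ / w) * R := by linarith
  have hp' : 0 < 1 - p := by linarith
  have hkey : (1 - p) / (1 + γ * ξ j) < (1 - p) / (1 + γ * ξ (j+1)) := by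
    rw [hrec]
    have h1 : p / (1 + (γ / w) * R) < p / (1 + γ * ξ j) :=
      div_lt_div_of_pos_left hp hApos hDA
    have : (1 - p) / (1 + γ * ξ j) = 1 / (1 + γ * ξ j) - p / (1 + γ * ξ j) := by
      ring
    rw [this]
    linarith
  have := (div_lt_div_iff₀ hApos hXpos).mp hkey
  nlinarith [mul_pos hp' hγ]
end

section
/- Let B, γ > 0, w ≥ 1 an integer, p ∈ (0,1). Suppose (ξ_j^*)_{j≥1} is a sequence of reals in [0,B] satisfying for all j ≥ 1 the recursion (1-p)/(1+γξ^*_{j+1}) = 1/(1+γξ^*_j) - p/(1 + (γ/w)(B - ∑_{i=1}^j ξ^*_i)) and the strict inequality ξ^*_j < (B - ∑_{i=1}^j ξ^*_i)/w for all j. Then (ξ^*_j) is strictly decreasing: ξ^*_{j+1} < ξ^*_j for all j ≥ 1. -/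
/-- If a sequence `(ξ*_j)_{j≥1}` with values in `[0,B]` satisfies the stationarity
recursion and the strict residual-battery inequality for all `j ≥ 1`, then it is
strictly decreasing. -/
theorem seq_strict_decreasing (B γ p : ℝ) (w : ℕ) (hB : 0 < B) (hγ : 0 < γ) (hw : 1 ≤ w)
    (hp : 0 < p) (hp1 : p < 1) (ξ : ℕ → ℝ)
    (hmem : ∀ j, 1 ≤ j → ξ j ∈ Set.Icc (0 : ℝ) B)
    (hrec : ∀ j, 1 ≤ j →
      (1 - p) / (1 + γ * ξ (j + 1))
        = 1 / (1 + γ * ξ j)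
          - p / (1 + (γ / w) * (B - ∑ i ∈ Finset.Icc 1 j, ξ i)))
    (hlt : ∀ j, 1 ≤ j → ξ j < (B - ∑ i ∈ Finset.Icc 1 j, ξ i) / w) :
    ∀ j, 1 ≤ j → ξ (j + 1) < ξ j := by
  intro j hj
  have hwR : (0:ℝ) < (w:ℝ) := by exact_mod_cast Nat.lt_of_lt_of_le Nat.zero_lt_one hw
  have hξj : 0 ≤ ξ j := (hmem j hj).1
  have hξj1 : 0 ≤ ξ (j + 1) := (hmem (j+1) (by omega)).1
  set R := B - ∑ i ∈ Finset.Icc 1 j, ξ i with hR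
  have hA : (0:ℝ) < 1 + γ * ξ j := by positivity
  have hC : (0:ℝ) < 1 + γ * ξ (j + 1) := by positivity
  have hAD : 1 + γ * ξ j < 1 + (γ / w) * R := by
    have h1 := hlt j hj
    have : γ * ξ j < γ * (R / w) := by
      exact mul_lt_mul_of_pos_left h1 hγ
    have he : γ * (R / w) = γ / w * R := by ring
    linarith
  have hD : (0:ℝ) < 1 + (γ / w) * R := lt_trans hA hAD
  have hpd : p / (1 + (γ / w) * R) < p / (1 + γ * ξ j) :=
    div_lt_div_of_pos_left hp hA hAD
  have hkey : (1 - p) / (1 + γ * ξ j) < (1 - p) / (1 + γ * ξ (j + 1)) := by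
    rw [hrec j hj]
    have : (1 - p) / (1 + γ * ξ j) = 1 / (1 + γ * ξ j) - p / (1 + γ * ξ j) := by
      ring
    rw [this]
    linarith
  have h1p : (0:ℝ) < 1 - p := by linarith
  rw [div_lt_div_iff₀ hA hC] at hkey
  have h2 := (mul_lt_mul_iff_right₀ h1p).mp hkey
  have h3 : γ * ξ (j + 1) < γ * ξ j := by linarith
  exact (mul_lt_mul_iff_right₀ hγ).mp h3
end

section
/- Let B, γ > 0, w ≥ 1 integer, p ∈ (0,1). For any admissible sequences x, y (nonnegative with total sum ≤ B) with x ≠ y, and any t ∈ (0,1), T_∞(t·x + (1-t)·y) > t·T_∞(x) + (1-t)·T_∞(y) provided T_∞(x) and T_∞(y) are finite; i.e., T_∞ is strictly concave on the set of admissible sequences. -/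
open Real


lemma aux_logb_le (c a b t : ℝ) (hc : 0 < c) (ha : 0 ≤ a) (hb : 0 ≤ b)
    (ht0 : 0 < t) (ht1 : t < 1) :
    t * Real.logb 2 (1 + c * a) + (1 - t) * Real.logb 2 (1 + c * b)
      ≤ Real.logb 2 (1 + c * (t * a + (1 - t) * b)) := by
  have h2 : (0:ℝ) < Real.log 2 := Real.log_pos (by norm_num)
  have hA : (0:ℝ) < 1 + c * a := by nlinarith
  have hB : (0:ℝ) < 1 + c * b := by nlinarith
  have key := (strictConcaveOn_log_Ioi.concaveOn).2 (Set.mem_Ioi.2 hA) (Set.mem_Ioi.2 hB)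
    ht0.le (by linarith : (0:ℝ) ≤ 1 - t) (by ring)
  simp only [smul_eq_mul] at key
  have harg : t * (1 + c * a) + (1 - t) * (1 + c * b) = 1 + c * (t * a + (1 - t) * b) := by ring
  rw [harg] at key
  have he : t * Real.logb 2 (1 + c * a) + (1 - t) * Real.logb 2 (1 + c * b)
      = (t * Real.log (1 + c * a) + (1 - t) * Real.log (1 + c * b)) / Real.log 2 := by
    simp only [Real.logb]; ring
  rw [he, Real.logb]
  exact div_le_div_of_nonneg_right key h2.le

lemma aux_logb_lt (c a b t : ℝ) (hc : 0 < c) (ha : 0 ≤ a) (hb : 0 ≤ b)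
    (hab : a ≠ b) (ht0 : 0 < t) (ht1 : t < 1) :
    t * Real.logb 2 (1 + c * a) + (1 - t) * Real.logb 2 (1 + c * b)
      < Real.logb 2 (1 + c * (t * a + (1 - t) * b)) := by
  have h2 : (0:ℝ) < Real.log 2 := Real.log_pos (by norm_num)
  have hA : (0:ℝ) < 1 + c * a := by nlinarith
  have hB : (0:ℝ) < 1 + c * b := by nlinarith
  have hne : (1 + c * a) ≠ (1 + c * b) := by
    intro h; exact hab (mul_left_cancel₀ hc.ne' (by linarith))
  have key := strictConcaveOn_log_Ioi.2 (Set.mem_Ioi.2 hA) (Set.mem_Ioi.2 hB)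
    hne ht0 (by linarith : (0:ℝ) < 1 - t) (by ring)
  simp only [smul_eq_mul] at key
  have harg : t * (1 + c * a) + (1 - t) * (1 + c * b) = 1 + c * (t * a + (1 - t) * b) := by ring
  rw [harg] at key
  have he : t * Real.logb 2 (1 + c * a) + (1 - t) * Real.logb 2 (1 + c * b)
      = (t * Real.log (1 + c * a) + (1 - t) * Real.log (1 + c * b)) / Real.log 2 := by
    simp only [Real.logb]; ring
  rw [he, Real.logb]
  exact div_lt_div_of_pos_right key h2

lemma summable_geom_bdd {r : ℝ} (h0 : 0 ≤ r) (h1 : r < 1) (w : ℕ) (v : ℕ → ℝ) (C : ℝ)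
    (hv0 : ∀ j, 0 ≤ v j) (hvC : ∀ j, v j ≤ C) :
    Summable (fun j : ℕ => r ^ (j + w) * v j) := by
  refine Summable.of_nonneg_of_le (fun j => mul_nonneg (pow_nonneg h0 _) (hv0 j))
    (fun j => ?_) ((summable_geometric_of_lt_one h0 h1).mul_left C)
  calc r ^ (j + w) * v j ≤ r ^ j * C := by
        apply mul_le_mul (pow_le_pow_of_le_one h0 h1.le (Nat.le_add_right j w)) (hvC j)
          (hv0 j) (pow_nonneg h0 j)
    _ = C * r ^ j := mul_comm _ _

/-- The long-term throughput functional `T_∞` of the look-ahead model (log base 2),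
evaluated at a sequence `x` indexed from 1. -/
noncomputable def Tinf (B γ p : ℝ) (w : ℕ) (x : ℕ → ℝ) : ℝ :=
  (∑ k ∈ Finset.Icc 1 w, p ^ 2 * (1 - p) ^ (k - 1) * ((k : ℝ) / 2) *
      Real.logb 2 (1 + γ * B / k))
  + (∑' j : ℕ, p * (1 - p) ^ ((j + 1) + w - 1) * (1 / 2) *
      Real.logb 2 (1 + γ * x (j + 1)))
  + (∑' k : ℕ, p ^ 2 * (1 - p) ^ ((k + 1) + w - 1) * ((w : ℝ) / 2) *
      Real.logb 2 (1 + (γ / w) * (B - ∑ i ∈ Finset.Icc 1 (k + 1), x i)))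

set_option maxHeartbeats 1000000 in
/-- `T_∞` is strictly concave on the set of admissible sequences: for admissible `x ≠ y`
(with finite values of `T_∞`, i.e. the defining series summable) and `t ∈ (0,1)`,
`T_∞(t x + (1-t) y) > t T_∞(x) + (1-t) T_∞(y)`. -/
theorem Tinf_strictConcave (B γ p : ℝ) (w : ℕ) (hB : 0 < B) (hγ : 0 < γ) (hw : 1 ≤ w)
    (hp : 0 < p) (hp1 : p < 1) (x y : ℕ → ℝ)
    (hx0 : ∀ j, 1 ≤ j → 0 ≤ x j) (hxB : ∀ N, ∑ j ∈ Finset.Icc 1 N, x j ≤ B)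
    (hy0 : ∀ j, 1 ≤ j → 0 ≤ y j) (hyB : ∀ N, ∑ j ∈ Finset.Icc 1 N, y j ≤ B)
    (hxfin1 : Summable (fun j : ℕ => p * (1 - p) ^ ((j + 1) + w - 1) * (1 / 2) *
        Real.logb 2 (1 + γ * x (j + 1))))
    (hxfin2 : Summable (fun k : ℕ => p ^ 2 * (1 - p) ^ ((k + 1) + w - 1) * ((w : ℝ) / 2) *
        Real.logb 2 (1 + (γ / w) * (B - ∑ i ∈ Finset.Icc 1 (k + 1), x i))))
    (hyfin1 : Summable (fun j : ℕ => p * (1 - p) ^ ((j + 1) + w - 1) * (1 / 2) *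
        Real.logb 2 (1 + γ * y (j + 1))))
    (hyfin2 : Summable (fun k : ℕ => p ^ 2 * (1 - p) ^ ((k + 1) + w - 1) * ((w : ℝ) / 2) *
        Real.logb 2 (1 + (γ / w) * (B - ∑ i ∈ Finset.Icc 1 (k + 1), y i))))
    (hne : ∃ j, 1 ≤ j ∧ x j ≠ y j)
    (t : ℝ) (ht0 : 0 < t) (ht1 : t < 1) :
    t * Tinf B γ p w x + (1 - t) * Tinf B γ p w y
      < Tinf B γ p w (fun j => t * x j + (1 - t) * y j) := by
  obtain ⟨j0, hj0, hxy⟩ := hne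
  have h2 : (1:ℝ) < 2 := one_lt_two
  have hqpos : (0:ℝ) < 1 - p := by linarith
  have hq0 : (0:ℝ) ≤ 1 - p := hqpos.le
  have hq1 : 1 - p < 1 := by linarith
  have hwR : (0:ℝ) < (w:ℝ) := by exact_mod_cast hw
  have hcw : 0 < γ / (w:ℝ) := div_pos hγ hwR
  have hz0 : ∀ j, 1 ≤ j → 0 ≤ t * x j + (1 - t) * y j := fun j hj => by
    nlinarith [hx0 j hj, hy0 j hj]
  have hzsum : ∀ N, ∑ i ∈ Finset.Icc 1 N, (t * x i + (1 - t) * y i)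
      = t * ∑ i ∈ Finset.Icc 1 N, x i + (1 - t) * ∑ i ∈ Finset.Icc 1 N, y i := by
    intro N; rw [Finset.sum_add_distrib, Finset.mul_sum, Finset.mul_sum]
  have hzB : ∀ N, ∑ i ∈ Finset.Icc 1 N, (t * x i + (1 - t) * y i) ≤ B := by
    intro N; rw [hzsum]; nlinarith [hxB N, hyB N]
  have hzj : ∀ j, 1 ≤ j → t * x j + (1 - t) * y j ≤ B := by
    intro j hj
    have h1 := Finset.single_le_sum (f := fun i => t * x i + (1 - t) * y i)
      (fun i hi => hz0 i (Finset.mem_Icc.1 hi).1) (Finset.mem_Icc.2 ⟨hj, le_refl j⟩)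
    exact h1.trans (hzB j)
  have hzS0 : ∀ N, 0 ≤ ∑ i ∈ Finset.Icc 1 N, (t * x i + (1 - t) * y i) :=
    fun N => Finset.sum_nonneg (fun i hi => hz0 i (Finset.mem_Icc.1 hi).1)
  -- summability of the two series for the convex combination
  have hsz1 : Summable (fun j : ℕ => p * (1 - p) ^ ((j + 1) + w - 1) * (1 / 2) *
      Real.logb 2 (1 + γ * (t * x (j + 1) + (1 - t) * y (j + 1)))) := by
    refine Summable.congr (summable_geom_bdd hq0 hq1 w
      (fun j => p * (1 / 2) * Real.logb 2 (1 + γ * (t * x (j + 1) + (1 - t) * y (j + 1))))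
      (p * (1 / 2) * Real.logb 2 (1 + γ * B)) (fun j => ?_) (fun j => ?_)) (fun j => ?_)
    · exact mul_nonneg (by positivity) (Real.logb_nonneg h2
        (by nlinarith [mul_nonneg hγ.le (hz0 (j + 1) (by omega))]))
    · have hzle := hzj (j + 1) (by omega)
      have hz := hz0 (j + 1) (by omega)
      have hpos : (0:ℝ) < 1 + γ * (t * x (j + 1) + (1 - t) * y (j + 1)) := by nlinarith
      exact mul_le_mul_of_nonneg_left
        (Real.logb_le_logb_of_le h2 hpos (by nlinarith)) (by positivity)
    · have he : (j + 1) + w - 1 = j + w := by omega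
      rw [he]; ring
  have hsz2 : Summable (fun k : ℕ => p ^ 2 * (1 - p) ^ ((k + 1) + w - 1) * ((w : ℝ) / 2) *
      Real.logb 2 (1 + (γ / w) *
        (B - ∑ i ∈ Finset.Icc 1 (k + 1), (t * x i + (1 - t) * y i)))) := by
    refine Summable.congr (summable_geom_bdd hq0 hq1 w
      (fun k => p ^ 2 * ((w : ℝ) / 2) * Real.logb 2 (1 + (γ / w) *
        (B - ∑ i ∈ Finset.Icc 1 (k + 1), (t * x i + (1 - t) * y i))))
      (p ^ 2 * ((w : ℝ) / 2) * Real.logb 2 (1 + (γ / w) * B))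
      (fun k => ?_) (fun k => ?_)) (fun k => ?_)
    · exact mul_nonneg (by positivity) (Real.logb_nonneg h2
        (by nlinarith [mul_nonneg hcw.le (sub_nonneg.2 (hzB (k + 1)))]))
    · have hS0 := hzS0 (k + 1)
      have hSB := hzB (k + 1)
      have hpos : (0:ℝ) < 1 + (γ / w) *
          (B - ∑ i ∈ Finset.Icc 1 (k + 1), (t * x i + (1 - t) * y i)) := by
        nlinarith [mul_nonneg hcw.le (sub_nonneg.2 hSB)]
      exact mul_le_mul_of_nonneg_left
        (Real.logb_le_logb_of_le h2 hpos (by nlinarith)) (by positivity)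
    · have he : (k + 1) + w - 1 = k + w := by omega
      rw [he]; ring
  -- pointwise inequalities, series 1
  have hle1 : ∀ j : ℕ,
      t * (p * (1 - p) ^ ((j + 1) + w - 1) * (1 / 2) * Real.logb 2 (1 + γ * x (j + 1)))
      + (1 - t) * (p * (1 - p) ^ ((j + 1) + w - 1) * (1 / 2) * Real.logb 2 (1 + γ * y (j + 1)))
      ≤ p * (1 - p) ^ ((j + 1) + w - 1) * (1 / 2) *
          Real.logb 2 (1 + γ * (t * x (j + 1) + (1 - t) * y (j + 1))) := by
    intro j
    have h := aux_logb_le γ (x (j + 1)) (y (j + 1)) t hγ (hx0 _ (by omega)) (hy0 _ (by omega))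
      ht0 ht1
    have hc : (0:ℝ) ≤ p * (1 - p) ^ ((j + 1) + w - 1) * (1 / 2) :=
      mul_nonneg (mul_nonneg hp.le (pow_nonneg hq0 _)) (by norm_num)
    nlinarith [mul_le_mul_of_nonneg_left h hc]
  -- strict at index j0 - 1
  have hlt1 :
      t * (p * (1 - p) ^ (((j0 - 1) + 1) + w - 1) * (1 / 2) * Real.logb 2 (1 + γ * x ((j0 - 1) + 1)))
      + (1 - t) * (p * (1 - p) ^ (((j0 - 1) + 1) + w - 1) * (1 / 2) *
          Real.logb 2 (1 + γ * y ((j0 - 1) + 1)))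
      < p * (1 - p) ^ (((j0 - 1) + 1) + w - 1) * (1 / 2) *
          Real.logb 2 (1 + γ * (t * x ((j0 - 1) + 1) + (1 - t) * y ((j0 - 1) + 1))) := by
    have hi : j0 - 1 + 1 = j0 := by omega
    rw [hi]
    have h := aux_logb_lt γ (x j0) (y j0) t hγ (hx0 _ hj0) (hy0 _ hj0) hxy ht0 ht1
    have hc : (0:ℝ) < p * (1 - p) ^ (j0 + w - 1) * (1 / 2) :=
      mul_pos (mul_pos hp (pow_pos hqpos _)) (by norm_num)
    nlinarith [mul_lt_mul_of_pos_left h hc]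
  -- pointwise inequality, series 2
  have hle2 : ∀ k : ℕ,
      t * (p ^ 2 * (1 - p) ^ ((k + 1) + w - 1) * ((w : ℝ) / 2) *
          Real.logb 2 (1 + (γ / w) * (B - ∑ i ∈ Finset.Icc 1 (k + 1), x i)))
      + (1 - t) * (p ^ 2 * (1 - p) ^ ((k + 1) + w - 1) * ((w : ℝ) / 2) *
          Real.logb 2 (1 + (γ / w) * (B - ∑ i ∈ Finset.Icc 1 (k + 1), y i)))
      ≤ p ^ 2 * (1 - p) ^ ((k + 1) + w - 1) * ((w : ℝ) / 2) *
          Real.logb 2 (1 + (γ / w) *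
            (B - ∑ i ∈ Finset.Icc 1 (k + 1), (t * x i + (1 - t) * y i))) := by
    intro k
    have harg : B - ∑ i ∈ Finset.Icc 1 (k + 1), (t * x i + (1 - t) * y i)
        = t * (B - ∑ i ∈ Finset.Icc 1 (k + 1), x i)
          + (1 - t) * (B - ∑ i ∈ Finset.Icc 1 (k + 1), y i) := by
      rw [hzsum]; ring
    rw [harg]
    have h := aux_logb_le (γ / w) (B - ∑ i ∈ Finset.Icc 1 (k + 1), x i)
      (B - ∑ i ∈ Finset.Icc 1 (k + 1), y i) t hcw
      (sub_nonneg.2 (hxB (k + 1))) (sub_nonneg.2 (hyB (k + 1))) ht0 ht1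
    have hc : (0:ℝ) ≤ p ^ 2 * (1 - p) ^ ((k + 1) + w - 1) * ((w : ℝ) / 2) :=
      mul_nonneg (mul_nonneg (pow_nonneg hp.le 2) (pow_nonneg hq0 _)) (by positivity)
    nlinarith [mul_le_mul_of_nonneg_left h hc]
  -- combine the series
  have hfx1 := hxfin1.mul_left t
  have hfy1 := hyfin1.mul_left (1 - t)
  have h1 : t * (∑' j : ℕ, p * (1 - p) ^ ((j + 1) + w - 1) * (1 / 2) *
        Real.logb 2 (1 + γ * x (j + 1)))
      + (1 - t) * (∑' j : ℕ, p * (1 - p) ^ ((j + 1) + w - 1) * (1 / 2) *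
        Real.logb 2 (1 + γ * y (j + 1)))
      < ∑' j : ℕ, p * (1 - p) ^ ((j + 1) + w - 1) * (1 / 2) *
        Real.logb 2 (1 + γ * (t * x (j + 1) + (1 - t) * y (j + 1))) := by
    have hkey := Summable.tsum_lt_tsum (i := j0 - 1) hle1 hlt1 (hfx1.add hfy1) hsz1
    rw [← tsum_mul_left, ← tsum_mul_left, ← Summable.tsum_add hfx1 hfy1]
    exact hkey
  have hfx2 := hxfin2.mul_left t
  have hfy2 := hyfin2.mul_left (1 - t)
  have h2' : t * (∑' k : ℕ, p ^ 2 * (1 - p) ^ ((k + 1) + w - 1) * ((w : ℝ) / 2) *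
        Real.logb 2 (1 + (γ / w) * (B - ∑ i ∈ Finset.Icc 1 (k + 1), x i)))
      + (1 - t) * (∑' k : ℕ, p ^ 2 * (1 - p) ^ ((k + 1) + w - 1) * ((w : ℝ) / 2) *
        Real.logb 2 (1 + (γ / w) * (B - ∑ i ∈ Finset.Icc 1 (k + 1), y i)))
      ≤ ∑' k : ℕ, p ^ 2 * (1 - p) ^ ((k + 1) + w - 1) * ((w : ℝ) / 2) *
        Real.logb 2 (1 + (γ / w) *
          (B - ∑ i ∈ Finset.Icc 1 (k + 1), (t * x i + (1 - t) * y i))) := by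
    have hkey := Summable.tsum_le_tsum hle2 (hfx2.add hfy2) hsz2
    rw [← tsum_mul_left, ← tsum_mul_left, ← Summable.tsum_add hfx2 hfy2]
    exact hkey
  simp only [Tinf]
  have e : ∀ A S1 S2 S1' S2' Z1 Z2 : ℝ, t * S1 + (1 - t) * S1' < Z1 →
      t * S2 + (1 - t) * S2' ≤ Z2 →
      t * (A + S1 + S2) + (1 - t) * (A + S1' + S2') < A + Z1 + Z2 := by
    intro A S1 S2 S1' S2' Z1 Z2 hA hB'
    nlinarith
  exact e _ _ _ _ _ _ _ h1 h2'
end
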